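/- Let n ≥ 4 and 0 < δ < 1/2. Let E = {(0,0)} × (1/√2)S^{n−3} ⊂ ℝ² × ℝ^{n−2} and Z = (1/√2)S¹ × {0}^{n−2}. Then for every z ∈ Z, the intersection E^δ ∩ S^δ(z) has Lebesgue measure at least c(n)|E^δ|, where S^δ(z) is the δ-annulus of the unit sphere centered at z, E^δ is the δ-neighborhood of E, and c(n) > 0 depends only on n. Consequently ‖N^δ‖_{L^p→L^p} ≥ c δ^{2 − 3/p} for all 1 ≤ p ≤ ∞. -/

import Mathlib

open MeasureTheory Metric Set
open scoped ENNReal NNReal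

noncomputable section

/-- The `δ`-annulus of the unit sphere centered at `c` in `ℝⁿ`. -/
def unitAnnulus (n : ℕ) (c : EuclideanSpace ℝ (Fin n)) (δ : ℝ) :
    Set (EuclideanSpace ℝ (Fin n)) :=
  {y | 1 - δ ≤ dist y c ∧ dist y c ≤ 1 + δ}

/-- The Nikodym maximal function associated with unit spheres. -/
def nikMax (n : ℕ) (δ : ℝ) (f : EuclideanSpace ℝ (Fin n) → ℝ)
    (x : EuclideanSpace ℝ (Fin n)) : ℝ :=
  ⨆ u ∈ sphere (0 : EuclideanSpace ℝ (Fin n)) 1,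
    ((volume (unitAnnulus n 0 δ)).toReal)⁻¹ *
      |∫ y in unitAnnulus n 0 δ, f (x + u + y)|

/-- The Lenz-type test set `E = {(0,0)} × (1/√2) S^{n−3}`: points of `ℝⁿ` with
first two coordinates zero lying on the sphere of radius `1/√2`. -/
def lenzSet (n : ℕ) (hn : 4 ≤ n) : Set (EuclideanSpace ℝ (Fin n)) :=
  {x | x ⟨0, by omega⟩ = 0 ∧ x ⟨1, by omega⟩ = 0 ∧ ‖x‖ = (Real.sqrt 2)⁻¹}

-- index equivalence
def eqv (n : ℕ) (hn : 4 ≤ n) : Fin (n-2) ≃ {i : Fin n // ¬ (i:ℕ) < 2} where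
  toFun j := ⟨⟨(j:ℕ)+2, by have := j.isLt; omega⟩, by simp⟩
  invFun i := ⟨(i:ℕ)-2, by have h1 := i.1.isLt; have h2 := not_lt.mp i.2; omega⟩
  left_inv j := by ext; simp
  right_inv i := by
    have h2 := not_lt.mp i.2
    ext
    simp [Nat.sub_add_cancel h2]

lemma sum_split {n : ℕ} (hn : 4 ≤ n) (f : Fin n → ℝ) :
    ∑ i, f i = f ⟨0, by omega⟩ + f ⟨1, by omega⟩ +
      ∑ j : Fin (n-2), f ((eqv n hn j) : Fin n) := by
  classical
  rw [← Finset.sum_filter_add_sum_filter_not Finset.univ (fun i : Fin n => (i:ℕ) < 2) f]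
  congr 1
  · have h01 : (⟨0, by omega⟩ : Fin n) ≠ ⟨1, by omega⟩ := by simp [Fin.ext_iff]
    have : Finset.univ.filter (fun i : Fin n => (i:ℕ) < 2) =
        {⟨0, by omega⟩, ⟨1, by omega⟩} := by
      ext i
      simp only [Finset.mem_filter, Finset.mem_univ, true_and, Finset.mem_insert,
        Finset.mem_singleton, Fin.ext_iff]
      omega
    rw [this, Finset.sum_pair h01]
  · calc ∑ i ∈ Finset.univ.filter (fun i : Fin n => ¬ (i:ℕ) < 2), f i
        = ∑ i : {i : Fin n // ¬ ((i:ℕ) < 2)}, f i :=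
          Finset.sum_subtype _ (by simp) f
      _ = ∑ j : Fin (n-2), f ((eqv n hn j) : Fin n) :=
          (Fintype.sum_equiv (eqv n hn) (fun j => f ((eqv n hn j) : Fin n))
            (fun i => f i) (fun j => rfl)).symm

lemma norm_sq_eq {n : ℕ} (x : EuclideanSpace ℝ (Fin n)) : ‖x‖^2 = ∑ i, (x i)^2 := by
  rw [EuclideanSpace.norm_eq, Real.sq_sqrt (by positivity)]
  simp [Real.norm_eq_abs, sq_abs]

lemma dist_sq_eq {n : ℕ} (x y : EuclideanSpace ℝ (Fin n)) :
    dist x y ^ 2 = ∑ i, (x i - y i)^2 := by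
  rw [EuclideanSpace.dist_eq, Real.sq_sqrt (by positivity)]
  simp [Real.dist_eq, sq_abs]

lemma lenz_orth {n : ℕ} {hn : 4 ≤ n} {e z : EuclideanSpace ℝ (Fin n)}
    (he : e ∈ lenzSet n hn)
    (hz2 : ∀ i : Fin n, 2 ≤ (i : ℕ) → z i = 0) (i : Fin n) : e i * z i = 0 := by
  by_cases h : (i:ℕ) < 2
  · have : e i = 0 := by
      interval_cases hi : (i : ℕ)
      · have : i = ⟨0, by omega⟩ := by ext; simp [hi]
        rw [this]; exact he.1
      · have : i = ⟨1, by omega⟩ := by ext; simp [hi]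
        rw [this]; exact he.2.1
    rw [this, zero_mul]
  · rw [hz2 i (not_lt.mp h), mul_zero]

lemma lenz_dist {n : ℕ} {hn : 4 ≤ n} {e z : EuclideanSpace ℝ (Fin n)}
    (he : e ∈ lenzSet n hn) (hz1 : ‖z‖ = (Real.sqrt 2)⁻¹)
    (hz2 : ∀ i : Fin n, 2 ≤ (i : ℕ) → z i = 0) : dist e z = 1 := by
  have h2 : (Real.sqrt 2)⁻¹ ^ 2 = 1/2 := by
    rw [← Real.sqrt_inv, Real.sq_sqrt (by norm_num)]
    norm_num
  have hsq : dist e z ^ 2 = 1 := by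
    rw [dist_sq_eq]
    have : ∀ i : Fin n, (e i - z i)^2 = (e i)^2 + (z i)^2 := by
      intro i
      have := lenz_orth he hz2 i
      ring_nf
      nlinarith [this]
    rw [Finset.sum_congr rfl (fun i _ => this i), Finset.sum_add_distrib,
      ← norm_sq_eq, ← norm_sq_eq, he.2.2, hz1, h2]
    norm_num
  nlinarith [dist_nonneg (x := e) (y := z), hsq]

lemma lenz_nonempty {n : ℕ} (hn : 4 ≤ n) :
    (EuclideanSpace.single (⟨2, by omega⟩ : Fin n) ((Real.sqrt 2)⁻¹)) ∈ lenzSet n hn := by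
  refine ⟨?_, ?_, ?_⟩
  · rw [EuclideanSpace.single_apply]
    simp [Fin.ext_iff]
  · rw [EuclideanSpace.single_apply]
    simp [Fin.ext_iff]
  · rw [EuclideanSpace.norm_single]
    rw [Real.norm_eq_abs, abs_of_nonneg (by positivity)]

lemma lenz_isCompact {n : ℕ} (hn : 4 ≤ n) : IsCompact (lenzSet n hn) := by
  apply isCompact_of_isClosed_isBounded
  · have h0 : Continuous fun x : EuclideanSpace ℝ (Fin n) => x ⟨0, by omega⟩ :=
      (EuclideanSpace.proj (⟨0, by omega⟩ : Fin n)).continuous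
    have h1 : Continuous fun x : EuclideanSpace ℝ (Fin n) => x ⟨1, by omega⟩ :=
      (EuclideanSpace.proj (⟨1, by omega⟩ : Fin n)).continuous
    have : lenzSet n hn =
        (fun x : EuclideanSpace ℝ (Fin n) => x ⟨0, by omega⟩) ⁻¹' {0} ∩
        ((fun x : EuclideanSpace ℝ (Fin n) => x ⟨1, by omega⟩) ⁻¹' {0} ∩
         (fun x : EuclideanSpace ℝ (Fin n) => ‖x‖) ⁻¹' {(Real.sqrt 2)⁻¹}) := by
      ext x; simp only [lenzSet, mem_setOf_eq, mem_inter_iff, mem_preimage,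
        mem_singleton_iff]
    rw [this]
    exact ((isClosed_singleton.preimage h0).inter ((isClosed_singleton.preimage h1).inter
      (isClosed_singleton.preimage continuous_norm)))
  · apply Bornology.IsBounded.subset (Metric.isBounded_closedBall
      (x := (0 : EuclideanSpace ℝ (Fin n))) (r := (Real.sqrt 2)⁻¹))
    intro x hx
    simp [Metric.mem_closedBall, dist_zero_right, hx.2.2.le]

lemma thickening_subset_annulus {n : ℕ} {hn : 4 ≤ n} {δ : ℝ} (hδ : 0 ≤ δ)
    {z : EuclideanSpace ℝ (Fin n)} (hz1 : ‖z‖ = (Real.sqrt 2)⁻¹)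
    (hz2 : ∀ i : Fin n, 2 ≤ (i : ℕ) → z i = 0) :
    Metric.cthickening δ (lenzSet n hn) ⊆ unitAnnulus n z δ := by
  intro x hx
  have hne : (lenzSet n hn).Nonempty := ⟨_, lenz_nonempty hn⟩
  obtain ⟨e, he, hee⟩ := (lenz_isCompact hn).exists_infDist_eq_dist hne x
  have hle : dist x e ≤ δ := by
    rw [← hee]
    have h' := Metric.mem_cthickening_iff.mp hx
    have := ENNReal.toReal_mono ENNReal.ofReal_ne_top h'
    rw [ENNReal.toReal_ofReal hδ] at this
    exact this
  have hd := lenz_dist he hz1 hz2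
  have h1 : dist x z ≤ dist x e + dist e z := dist_triangle x e z
  have h2 : dist e z ≤ dist e x + dist x z := dist_triangle e x z
  rw [dist_comm e x] at h2
  exact ⟨by rw [hd] at h2; linarith, by rw [hd] at h1; linarith⟩

lemma annulus_eq {n : ℕ} (z : EuclideanSpace ℝ (Fin n)) (δ : ℝ) :
    unitAnnulus n z δ = Metric.closedBall z (1+δ) \ Metric.ball z (1-δ) := by
  ext y
  simp only [unitAnnulus, mem_setOf_eq, mem_diff, Metric.mem_closedBall, Metric.mem_ball, not_lt]
  tauto

lemma nontrivial_ES {n : ℕ} (hn : 1 ≤ n) : Nontrivial (EuclideanSpace ℝ (Fin n)) := by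
  refine ⟨EuclideanSpace.single (⟨0, by omega⟩ : Fin n) 1, 0, fun h => ?_⟩
  have := congrFun (congrArg WithLp.ofLp h) (⟨0, by omega⟩ : Fin n)
  rw [EuclideanSpace.single_apply] at this
  simp at this

lemma annulus_volume {n : ℕ} (hn : 4 ≤ n) {δ : ℝ} (hδ0 : 0 < δ) (hδ1 : δ < 1/2)
    (z : EuclideanSpace ℝ (Fin n)) :
    volume (unitAnnulus n z δ) =
      (ENNReal.ofReal ((1+δ)^n) - ENNReal.ofReal ((1-δ)^n)) *
        volume (Metric.ball (0 : EuclideanSpace ℝ (Fin n)) 1) := by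
  haveI := nontrivial_ES (n := n) (by omega)
  rw [annulus_eq, measure_diff (Metric.ball_subset_closedBall.trans
      (Metric.closedBall_subset_closedBall (by linarith)))
      measurableSet_ball.nullMeasurableSet measure_ball_lt_top.ne,
    Measure.addHaar_closedBall volume z (by linarith),
    Measure.addHaar_ball volume z (by linarith), finrank_euclideanSpace_fin]
  exact (ENNReal.sub_mul (fun _ _ => measure_ball_lt_top.ne)).symm

lemma pow_sub_pow_le {n : ℕ} {δ : ℝ} (hδ0 : 0 ≤ δ) (hδ1 : δ ≤ 1/2) :
    (1+δ)^n - (1-δ)^n ≤ (2 * n * 2^n) * δ := by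
  have key := geom_sum₂_mul (1+δ) (1-δ) n
  have hsum : (∑ i ∈ Finset.range n, (1+δ) ^ i * (1-δ) ^ (n - 1 - i)) ≤ n * 2^n := by
    calc (∑ i ∈ Finset.range n, (1+δ) ^ i * (1-δ) ^ (n - 1 - i))
        ≤ ∑ i ∈ Finset.range n, (2:ℝ)^n := by
          apply Finset.sum_le_sum
          intro i hi
          have h1 : (1+δ)^i ≤ 2^n := by
            calc (1+δ)^i ≤ 2^i := pow_le_pow_left₀ (by linarith) (by linarith) i
              _ ≤ 2^n := pow_le_pow_right₀ (by norm_num) (Finset.mem_range.mp hi).le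
          have h2 : (1-δ)^(n-1-i) ≤ 1 := pow_le_one₀ (by linarith) (by linarith)
          have h3 : (0:ℝ) ≤ (1+δ)^i := by positivity
          nlinarith
      _ = n * 2^n := by rw [Finset.sum_const, Finset.card_range]; ring
  have hfac : (1+δ) - (1-δ) = 2*δ := by ring
  rw [hfac] at key
  have hsumnn : (0:ℝ) ≤ ∑ i ∈ Finset.range n, (1+δ) ^ i * (1-δ) ^ (n - 1 - i) := by
    apply Finset.sum_nonneg
    intro i _
    have h1 : (0:ℝ) ≤ (1-δ) ^ (n-1-i) := pow_nonneg (by linarith) _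
    have h2 : (0:ℝ) ≤ (1+δ) ^ i := by positivity
    exact mul_nonneg h2 h1
  nlinarith [key]

lemma pow_sub_pow_pos {n : ℕ} (hn : 1 ≤ n) {δ : ℝ} (hδ0 : 0 < δ) (hδ1 : δ < 1/2) :
    0 < (1+δ)^n - (1-δ)^n := by
  have : (1-δ)^n < (1+δ)^n := pow_lt_pow_left₀ (by linarith) (by linarith) (by omega)
  linarith

lemma sqrt2_inv_bounds : 2/3 ≤ (Real.sqrt 2)⁻¹ ∧ (Real.sqrt 2)⁻¹ ≤ 3/4 := by
  have h1 : (0:ℝ) < Real.sqrt 2 := Real.sqrt_pos.mpr (by norm_num)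
  have h2 : Real.sqrt 2 ^ 2 = 2 := Real.sq_sqrt (by norm_num)
  have h3 : Real.sqrt 2 ≤ 3/2 := by nlinarith
  have h4 : 4/3 ≤ Real.sqrt 2 := by nlinarith
  constructor
  · rw [le_inv_comm₀ (by norm_num) h1]
    linarith
  · rw [inv_le_comm₀ h1 (by norm_num)]
    linarith

lemma pow_sub_pow_ge {a b : ℝ} (m : ℕ) (hm : 1 ≤ m) (hb : 0 ≤ b) (hab : b ≤ a) :
    (a - b) * b^(m-1) ≤ a^m - b^m := by
  have key := geom_sum₂_mul a b m
  have hterm : b^(m-1) ≤ ∑ i ∈ Finset.range m, a^i * b^(m-1-i) := by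
    have h0 : (0:ℕ) ∈ Finset.range m := Finset.mem_range.mpr (by omega)
    have := Finset.single_le_sum (f := fun i => a^i * b^(m-1-i))
      (fun i _ => mul_nonneg (pow_nonneg (hb.trans hab) _) (pow_nonneg hb _)) h0
    simpa using this
  nlinarith [pow_nonneg hb (m-1), sub_nonneg.mpr hab]

lemma shell_volume {m : ℕ} (hm : 2 ≤ m) {r₁ r₂ : ℝ} (h1 : 0 ≤ r₁) (h12 : r₁ ≤ r₂) :
    volume (Metric.closedBall (0 : EuclideanSpace ℝ (Fin m)) r₂ \
        Metric.ball (0 : EuclideanSpace ℝ (Fin m)) r₁) =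
      ENNReal.ofReal (r₂^m - r₁^m) *
        volume (Metric.ball (0 : EuclideanSpace ℝ (Fin m)) 1) := by
  haveI := nontrivial_ES (n := m) (by omega)
  rw [measure_diff (Metric.ball_subset_closedBall.trans
      (Metric.closedBall_subset_closedBall h12))
      measurableSet_ball.nullMeasurableSet measure_ball_lt_top.ne,
    Measure.addHaar_closedBall volume _ (h1.trans h12),
    Measure.addHaar_ball volume _ h1, finrank_euclideanSpace_fin,
    ENNReal.ofReal_sub _ (pow_nonneg h1 _)]
  exact (ENNReal.sub_mul (fun _ _ => measure_ball_lt_top.ne)).symm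

set_option maxHeartbeats 2000000 in
lemma volume_cthickening_lower {n : ℕ} (hn : 4 ≤ n) {δ : ℝ} (hδ0 : 0 < δ) (hδ1 : δ < 1/2) :
    ENNReal.ofReal (δ^3 * ((1/8) * (2/5:ℝ)^(n-3))) *
        volume (Metric.ball (0 : EuclideanSpace ℝ (Fin (n-2))) 1) ≤
      volume (Metric.cthickening δ (lenzSet n hn)) := by
  classical
  set m := n - 2 with hm
  have hm2 : 2 ≤ m := by omega
  set r₂ : ℝ := (Real.sqrt 2)⁻¹ with hr₂
  set r₁ : ℝ := r₂ - δ/2 with hr₁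
  have hs2 := sqrt2_inv_bounds
  have hr₁pos : (2/5 : ℝ) ≤ r₁ := by
    rw [hr₁, hr₂]; linarith [hs2.1]
  have hr₁r₂ : r₁ ≤ r₂ := by rw [hr₁]; linarith
  -- the equivalences
  set F := (MeasurableEquiv.toLp 2 (Fin n → ℝ)).symm with hF
  set G := MeasurableEquiv.piEquivPiSubtypeProd (fun _ : Fin n => ℝ)
    (fun i : Fin n => (i:ℕ) < 2) with hG
  set H := MeasurableEquiv.piCongrLeft (fun _ : {i : Fin n // ¬ (i:ℕ) < 2} => ℝ)
    (eqv n hn) with hH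
  set F' := (MeasurableEquiv.toLp 2 (Fin m → ℝ)).symm with hF'
  set Shell : Set (EuclideanSpace ℝ (Fin m)) :=
    Metric.closedBall 0 r₂ \ Metric.ball 0 r₁ with hShell
  have hShellMeas : MeasurableSet Shell :=
    measurableSet_closedBall.diff measurableSet_ball
  set Sh : Set ({i : Fin n // ¬ (i:ℕ) < 2} → ℝ) :=
    H.symm ⁻¹' (F'.symm ⁻¹' Shell) with hSh
  have hShMeas : MeasurableSet Sh :=
    H.symm.measurable (F'.symm.measurable hShellMeas)
  set Rect : Set ({i : Fin n // (i:ℕ) < 2} → ℝ) :=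
    univ.pi (fun _ => Icc (-(δ/2)) (δ/2)) with hRect
  have hRectMeas : MeasurableSet Rect :=
    MeasurableSet.univ_pi (fun _ => measurableSet_Icc)
  set S : Set (EuclideanSpace ℝ (Fin n)) := F ⁻¹' (G ⁻¹' (Rect ×ˢ Sh)) with hS
  -- volume of S
  have hvolS : volume S = ENNReal.ofReal δ ^ 2 *
      (ENNReal.ofReal (r₂^m - r₁^m) *
        volume (Metric.ball (0 : EuclideanSpace ℝ (Fin m)) 1)) := by
    have hcard : Fintype.card {i : Fin n // (i:ℕ) < 2} = 2 := by
      rw [Fintype.card_subtype]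
      have : Finset.univ.filter (fun i : Fin n => (i:ℕ) < 2) =
          {(⟨0, by omega⟩ : Fin n), ⟨1, by omega⟩} := by
        ext i
        simp only [Finset.mem_filter, Finset.mem_univ, true_and, Finset.mem_insert,
          Finset.mem_singleton, Fin.ext_iff]
        omega
      rw [this]
      rw [Finset.card_insert_of_notMem (by simp [Fin.ext_iff]), Finset.card_singleton]
    calc volume S
        = volume (Rect ×ˢ Sh) := by
          rw [hS,
            (EuclideanSpace.volume_preserving_symm_measurableEquiv_toLp (Fin n)).measure_preimage
              ((hRectMeas.prod hShMeas).preimage G.measurable).nullMeasurableSet,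
            (volume_preserving_piEquivPiSubtypeProd (fun _ : Fin n => ℝ)
              (fun i : Fin n => (i:ℕ) < 2)).measure_preimage
              (hRectMeas.prod hShMeas).nullMeasurableSet]
      _ = volume Rect * volume Sh := by
          rw [MeasureTheory.Measure.volume_eq_prod, Measure.prod_prod]
      _ = ENNReal.ofReal δ ^ 2 *
          (ENNReal.ofReal (r₂^m - r₁^m) *
            volume (Metric.ball (0 : EuclideanSpace ℝ (Fin m)) 1)) := by
          congr 1
          · rw [hRect, volume_pi_pi]
            simp only [Real.volume_Icc]
            rw [Finset.prod_const, Finset.card_univ, hcard]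
            norm_num
          · rw [hSh, ← Set.preimage_comp]
            rw [show (F'.symm ∘ H.symm : _ → EuclideanSpace ℝ (Fin m)) ⁻¹' Shell =
              H.symm ⁻¹' (F'.symm ⁻¹' Shell) from rfl]
            rw [((volume_measurePreserving_piCongrLeft (fun _ => ℝ)
                (eqv n hn)).symm H).measure_preimage
                ((hShellMeas.preimage F'.symm.measurable)).nullMeasurableSet,
              ((EuclideanSpace.volume_preserving_symm_measurableEquiv_toLp
                (Fin m)).symm).measure_preimage hShellMeas.nullMeasurableSet]
            exact shell_volume hm2 (le_trans (by norm_num) hr₁pos) hr₁r₂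
  have hSsub : S ⊆ Metric.cthickening δ (lenzSet n hn) := by
    intro x hx
    rw [hS, Set.mem_preimage, Set.mem_preimage, Set.mem_prod] at hx
    obtain ⟨hx1, hx2⟩ := hx
    have hx1' : ∀ i : {i : Fin n // (i:ℕ) < 2}, |x i.1| ≤ δ/2 := by
      intro i
      have h := hx1 i (mem_univ i)
      rw [show ((G (F x)).1 i) = x i.1 from rfl] at h
      rw [abs_le]
      exact h
    set w : EuclideanSpace ℝ (Fin m) := F'.symm (H.symm ((G (F x)).2)) with hw
    have hwShell : w ∈ Shell := hx2
    have hwj : ∀ j : Fin m, w j = x ((eqv n hn j) : Fin n) := fun j => rfl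
    set t : ℝ := ‖w‖ with ht
    have htlow : r₁ ≤ t := by
      have h := hwShell.2
      rw [Metric.mem_ball, dist_zero_right] at h
      exact not_lt.mp h
    have hthigh : t ≤ r₂ := by
      have h := hwShell.1
      rwa [Metric.mem_closedBall, dist_zero_right] at h
    have htpos : 0 < t := lt_of_lt_of_le (by norm_num : (0:ℝ) < 2/5) (hr₁pos.trans htlow)
    have ht2 : ∑ j : Fin m, (x ((eqv n hn j) : Fin n))^2 = t^2 := by
      rw [ht, norm_sq_eq]
      exact Finset.sum_congr rfl (fun j _ => by rw [hwj j])
    set e : EuclideanSpace ℝ (Fin n) := ((MeasurableEquiv.toLp 2 (Fin n → ℝ)).symm).symm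
      (fun i => if (i:ℕ) < 2 then 0 else ((Real.sqrt 2)⁻¹/t) * x i) with he
    have hei : ∀ i : Fin n, e i = if (i:ℕ) < 2 then 0 else ((Real.sqrt 2)⁻¹/t) * x i :=
      fun i => rfl
    have hetail : ∀ j : Fin m, e ((eqv n hn j) : Fin n) =
        ((Real.sqrt 2)⁻¹/t) * x ((eqv n hn j) : Fin n) := by
      intro j
      rw [hei, if_neg (eqv n hn j).2]
    have htailsum : ∑ j : Fin m, (e ((eqv n hn j) : Fin n))^2 = ((Real.sqrt 2)⁻¹)^2 := by
      calc ∑ j : Fin m, (e ((eqv n hn j) : Fin n))^2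
          = ∑ j : Fin m, ((Real.sqrt 2)⁻¹/t)^2 * (x ((eqv n hn j) : Fin n))^2 := by
            refine Finset.sum_congr rfl (fun j _ => ?_)
            rw [hetail j, mul_pow]
        _ = ((Real.sqrt 2)⁻¹/t)^2 * t^2 := by rw [← Finset.mul_sum, ht2]
        _ = ((Real.sqrt 2)⁻¹)^2 := by
            field_simp
    have h0 : e ⟨0, by omega⟩ = 0 := by
      rw [hei ⟨0, by omega⟩]
      exact if_pos (by norm_num)
    have h1 : e ⟨1, by omega⟩ = 0 := by
      rw [hei ⟨1, by omega⟩]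
      exact if_pos (by norm_num)
    have henorm : ‖e‖ = (Real.sqrt 2)⁻¹ := by
      have hsq : ‖e‖^2 = ((Real.sqrt 2)⁻¹)^2 := by
        rw [norm_sq_eq, sum_split hn (fun i => (e i)^2)]
        rw [h0, h1, htailsum]
        ring
      rw [← Real.sqrt_sq (norm_nonneg e), hsq,
        Real.sqrt_sq (inv_nonneg.mpr (Real.sqrt_nonneg 2))]
    have hemem : e ∈ lenzSet n hn := ⟨h0, h1, henorm⟩
    clear_value e
    clear he hei
    clear_value w t
    clear hw ht hwj hwShell hx1 hx2 htailsum
    clear hS hSh hRect hShell hShellMeas hShMeas hRectMeas hvolS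
    clear S Sh Rect Shell hF hG hH hF' F G H F'
    have hdist : dist x e ≤ δ := by
      have hd2 : dist x e ^ 2 ≤ 3 * (δ/2)^2 := by
        rw [dist_sq_eq, sum_split hn (fun i => (x i - e i)^2)]
        have h0e := h0
        have h1e := h1
        have h0 : (x ⟨0, by omega⟩ - e ⟨0, by omega⟩)^2 ≤ (δ/2)^2 := by
          rw [h0e, sub_zero, ← sq_abs]
          have := hx1' ⟨⟨0, by omega⟩, by norm_num⟩
          nlinarith [abs_nonneg (x (⟨0, by omega⟩ : Fin n))]
        have h1 : (x ⟨1, by omega⟩ - e ⟨1, by omega⟩)^2 ≤ (δ/2)^2 := by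
          rw [h1e, sub_zero, ← sq_abs]
          have := hx1' ⟨⟨1, by omega⟩, by norm_num⟩
          nlinarith [abs_nonneg (x (⟨1, by omega⟩ : Fin n))]
        have htail : ∑ j : Fin m, (x ((eqv n hn j) : Fin n) - e ((eqv n hn j) : Fin n))^2
            ≤ (δ/2)^2 := by
          have heq : ∑ j : Fin m, (x ((eqv n hn j) : Fin n) - e ((eqv n hn j) : Fin n))^2
              = (1 - (Real.sqrt 2)⁻¹/t)^2 * t^2 := by
            calc ∑ j : Fin m, (x ((eqv n hn j) : Fin n) - e ((eqv n hn j) : Fin n))^2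
                = ∑ j : Fin m, (1 - (Real.sqrt 2)⁻¹/t)^2 * (x ((eqv n hn j) : Fin n))^2 := by
                  refine Finset.sum_congr rfl (fun j _ => ?_)
                  rw [hetail j]
                  ring
              _ = (1 - (Real.sqrt 2)⁻¹/t)^2 * t^2 := by rw [← Finset.mul_sum, ht2]
          rw [heq]
          have heq2 : (1 - (Real.sqrt 2)⁻¹/t)^2 * t^2 = (t - (Real.sqrt 2)⁻¹)^2 := by
            have ht' : t ≠ 0 := ne_of_gt htpos
            have hstep : 1 - (Real.sqrt 2)⁻¹/t = (t - (Real.sqrt 2)⁻¹)/t := by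
              field_simp
            rw [hstep, div_pow, div_mul_cancel₀ _ (pow_ne_zero 2 ht')]
          rw [heq2]
          have hb1 : t - (Real.sqrt 2)⁻¹ ≤ 0 := by rw [hr₂] at hthigh; linarith
          have hb2 : -(δ/2) ≤ t - (Real.sqrt 2)⁻¹ := by
            rw [hr₁, hr₂] at htlow; linarith
          nlinarith
        nlinarith
      nlinarith [dist_nonneg (x := x) (y := e)]
    exact Metric.mem_cthickening_of_dist_le x e δ _ hemem hdist
  -- conclude
  have hkey : (δ/2) * (2/5:ℝ)^(n-3) ≤ r₂^m - r₁^m := by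
    have h1 := pow_sub_pow_ge m (by omega) (le_trans (by norm_num) hr₁pos) hr₁r₂
    have h2 : (2/5:ℝ)^(m-1) ≤ r₁^(m-1) := pow_le_pow_left₀ (by norm_num) hr₁pos _
    have h3 : r₂ - r₁ = δ/2 := by rw [hr₁]; ring
    have h4 : m - 1 = n - 3 := by omega
    rw [h3, h4] at h1
    have h5 := mul_le_mul_of_nonneg_left h2 (le_of_lt (half_pos hδ0))
    rw [h4] at h5
    linarith
  calc ENNReal.ofReal (δ^3 * ((1/8) * (2/5:ℝ)^(n-3))) *
        volume (Metric.ball (0 : EuclideanSpace ℝ (Fin (n-2))) 1)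
      ≤ ENNReal.ofReal (δ^2 * (r₂^m - r₁^m)) *
        volume (Metric.ball (0 : EuclideanSpace ℝ (Fin (n-2))) 1) := by
        apply mul_le_mul_left
        apply ENNReal.ofReal_le_ofReal
        have h5 : δ^3 * ((1/8) * (2/5:ℝ)^(n-3)) ≤ δ^2 * ((δ/2) * (2/5:ℝ)^(n-3)) := by
          have := pow_nonneg (show (0:ℝ) ≤ 2/5 by norm_num) (n-3)
          nlinarith [pow_pos hδ0 3]
        refine h5.trans ?_
        have := pow_nonneg hδ0.le 2
        nlinarith
    _ = volume S := by
        rw [hvolS, ← ENNReal.ofReal_pow hδ0.le, ← mul_assoc,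
          ← ENNReal.ofReal_mul (sq_nonneg δ)]
    _ ≤ volume (Metric.cthickening δ (lenzSet n hn)) := measure_mono hSsub

lemma norm_eq_of_sq {n : ℕ} {x : EuclideanSpace ℝ (Fin n)} {a : ℝ} (ha : 0 ≤ a)
    (h : ‖x‖^2 = a^2) : ‖x‖ = a := by
  rw [← Real.sqrt_sq (norm_nonneg x), h, Real.sqrt_sq ha]

lemma dist_eq_of_sq {n : ℕ} {x y : EuclideanSpace ℝ (Fin n)} {a : ℝ} (ha : 0 ≤ a)
    (h : dist x y ^2 = a^2) : dist x y = a := by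
  rw [← Real.sqrt_sq dist_nonneg, h, Real.sqrt_sq ha]

def zfun (n : ℕ) (θ : ℝ) : EuclideanSpace ℝ (Fin n) :=
  (WithLp.equiv 2 (Fin n → ℝ)).symm
    (fun i => if (i:ℕ) = 0 then Real.cos θ * (Real.sqrt 2)⁻¹
      else if (i:ℕ) = 1 then Real.sin θ * (Real.sqrt 2)⁻¹ else 0)

lemma zfun_apply {n : ℕ} (θ : ℝ) (i : Fin n) :
    zfun n θ i = if (i:ℕ) = 0 then Real.cos θ * (Real.sqrt 2)⁻¹
      else if (i:ℕ) = 1 then Real.sin θ * (Real.sqrt 2)⁻¹ else 0 := rfl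

lemma zfun_tail {n : ℕ} (hn : 4 ≤ n) (θ : ℝ) (i : Fin n) (hi : 2 ≤ (i:ℕ)) :
    zfun n θ i = 0 := by
  rw [zfun_apply, if_neg (by omega), if_neg (by omega)]

lemma zfun_norm {n : ℕ} (hn : 4 ≤ n) (θ : ℝ) : ‖zfun n θ‖ = (Real.sqrt 2)⁻¹ := by
  apply norm_eq_of_sq (by positivity)
  rw [norm_sq_eq, sum_split hn (fun i => (zfun n θ i)^2)]
  have h0 : zfun n θ ⟨0, by omega⟩ = Real.cos θ * (Real.sqrt 2)⁻¹ := by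
    rw [zfun_apply]; norm_num
  have h1 : zfun n θ ⟨1, by omega⟩ = Real.sin θ * (Real.sqrt 2)⁻¹ := by
    rw [zfun_apply]; norm_num
  have htail : ∀ j : Fin (n-2), zfun n θ ((eqv n hn j) : Fin n) = 0 := by
    intro j
    exact zfun_tail hn θ _ (by
      have : (((eqv n hn j) : Fin n) : ℕ) = (j:ℕ) + 2 := rfl
      omega)
  rw [h0, h1, Finset.sum_congr rfl (fun j _ => by rw [htail j])]
  simp only [ne_eq, OfNat.ofNat_ne_zero, not_false_eq_true, zero_pow, Finset.sum_const,
    Finset.card_univ, smul_zero, add_zero]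
  have := Real.sin_sq_add_cos_sq θ
  ring_nf
  nlinarith [this]

lemma zfun_continuous (n : ℕ) : Continuous (zfun n) := by
  have h : Continuous (fun θ => (fun i : Fin n =>
      if (i:ℕ) = 0 then Real.cos θ * (Real.sqrt 2)⁻¹
      else if (i:ℕ) = 1 then Real.sin θ * (Real.sqrt 2)⁻¹ else 0)) := by
    apply continuous_pi
    intro i
    by_cases h0 : (i:ℕ) = 0
    · rw [show (fun θ => if (i:ℕ) = 0 then Real.cos θ * (Real.sqrt 2)⁻¹
            else if (i:ℕ) = 1 then Real.sin θ * (Real.sqrt 2)⁻¹ else 0) =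
            (fun θ => Real.cos θ * (Real.sqrt 2)⁻¹) by
          funext θ; rw [if_pos h0]]
      fun_prop
    · by_cases h1 : (i:ℕ) = 1
      · rw [show (fun θ => if (i:ℕ) = 0 then Real.cos θ * (Real.sqrt 2)⁻¹
            else if (i:ℕ) = 1 then Real.sin θ * (Real.sqrt 2)⁻¹ else 0) =
            (fun θ => Real.sin θ * (Real.sqrt 2)⁻¹) by
          funext θ; rw [if_neg h0, if_pos h1]]
        fun_prop
      · rw [show (fun θ => if (i:ℕ) = 0 then Real.cos θ * (Real.sqrt 2)⁻¹
            else if (i:ℕ) = 1 then Real.sin θ * (Real.sqrt 2)⁻¹ else 0) =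
            (fun _ => (0:ℝ)) by
          funext θ; rw [if_neg h0, if_neg h1]]
        exact continuous_const
  exact ((PiLp.continuousLinearEquiv 2 ℝ (fun _ : Fin n => ℝ)).symm.continuous).comp h

def pcen (n : ℕ) : EuclideanSpace ℝ (Fin n) :=
  (WithLp.equiv 2 (Fin n → ℝ)).symm
    (fun i => if (i:ℕ) = 0 then (Real.sqrt 2)⁻¹ + 9/10 else 0)

lemma pcen_apply {n : ℕ} (i : Fin n) :
    pcen n i = if (i:ℕ) = 0 then (Real.sqrt 2)⁻¹ + 9/10 else 0 := rfl

lemma dist_pcen {n : ℕ} (hn : 4 ≤ n) (θ : ℝ) :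
    dist (pcen n) (zfun n θ) ^ 2 =
      ((Real.sqrt 2)⁻¹ + 9/10 - Real.cos θ * (Real.sqrt 2)⁻¹)^2 +
        (Real.sin θ * (Real.sqrt 2)⁻¹)^2 := by
  rw [dist_sq_eq, sum_split hn (fun i => (pcen n i - zfun n θ i)^2)]
  have h0p : pcen n ⟨0, by omega⟩ = (Real.sqrt 2)⁻¹ + 9/10 := by rw [pcen_apply]; norm_num
  have h1p : pcen n ⟨1, by omega⟩ = 0 := by rw [pcen_apply]; norm_num
  have h0 : zfun n θ ⟨0, by omega⟩ = Real.cos θ * (Real.sqrt 2)⁻¹ := by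
    rw [zfun_apply]; norm_num
  have h1 : zfun n θ ⟨1, by omega⟩ = Real.sin θ * (Real.sqrt 2)⁻¹ := by
    rw [zfun_apply]; norm_num
  have htail : ∀ j : Fin (n-2),
      pcen n ((eqv n hn j) : Fin n) - zfun n θ ((eqv n hn j) : Fin n) = 0 := by
    intro j
    have hge : 2 ≤ (((eqv n hn j) : Fin n) : ℕ) := by
      have : (((eqv n hn j) : Fin n) : ℕ) = (j:ℕ) + 2 := rfl
      omega
    rw [pcen_apply, if_neg (by omega), zfun_tail hn θ _ hge, sub_zero]
  rw [h0p, h1p, h0, h1,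
    Finset.sum_congr rfl (fun j _ => by rw [htail j])]
  simp only [ne_eq, OfNat.ofNat_ne_zero, not_false_eq_true, zero_pow, Finset.sum_const,
    Finset.card_univ, smul_zero, add_zero]
  ring

lemma exists_z {n : ℕ} (hn : 4 ≤ n) {x : EuclideanSpace ℝ (Fin n)}
    (hx : x ∈ Metric.ball (pcen n) (1/10)) :
    ∃ z : EuclideanSpace ℝ (Fin n), ‖z‖ = (Real.sqrt 2)⁻¹ ∧
      (∀ i : Fin n, 2 ≤ (i : ℕ) → z i = 0) ∧ dist x z = 1 := by
  have hs2 := sqrt2_inv_bounds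
  have hd0 : dist (pcen n) (zfun n 0) = 9/10 := by
    apply dist_eq_of_sq (by norm_num)
    rw [dist_pcen hn 0]
    simp [Real.cos_zero, Real.sin_zero]
  have hdpi : dist (pcen n) (zfun n Real.pi) = 2 * (Real.sqrt 2)⁻¹ + 9/10 := by
    apply dist_eq_of_sq (by positivity)
    rw [dist_pcen hn Real.pi]
    simp [Real.cos_pi, Real.sin_pi]
    ring
  have hxp : dist x (pcen n) < 1/10 := Metric.mem_ball.mp hx
  have hg : Continuous fun θ => dist x (zfun n θ) :=
    (Continuous.dist continuous_const (zfun_continuous n))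
  have h0le : dist x (zfun n 0) ≤ 1 := by
    calc dist x (zfun n 0) ≤ dist x (pcen n) + dist (pcen n) (zfun n 0) := dist_triangle _ _ _
      _ ≤ 1 := by rw [hd0]; linarith
  have hpige : 1 ≤ dist x (zfun n Real.pi) := by
    have := dist_triangle (pcen n) x (zfun n Real.pi)
    rw [dist_comm (pcen n) x] at this
    rw [hdpi] at this
    linarith [hs2.1]
  have hIVT := intermediate_value_Icc (le_of_lt Real.pi_pos)
    (hg.continuousOn : ContinuousOn (fun θ => dist x (zfun n θ)) (Icc 0 Real.pi))
  have h1mem : (1:ℝ) ∈ Icc (dist x (zfun n 0)) (dist x (zfun n Real.pi)) := ⟨h0le, hpige⟩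
  obtain ⟨θ, _, hθ⟩ := hIVT h1mem
  exact ⟨zfun n θ, zfun_norm hn θ, fun i hi => zfun_tail hn θ i hi, hθ⟩

section Nik
variable {n : ℕ} (hn : 4 ≤ n) {δ : ℝ}

lemma Eδ_measurable : MeasurableSet (Metric.cthickening δ (lenzSet n hn)) :=
  Metric.isClosed_cthickening.measurableSet

lemma annulus_measurable (z : EuclideanSpace ℝ (Fin n)) (δ : ℝ) :
    MeasurableSet (unitAnnulus n z δ) := by
  rw [annulus_eq]
  exact measurableSet_closedBall.diff measurableSet_ball

set_option maxHeartbeats 1000000 in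
lemma integral_indicator_eq (hδ0 : 0 < δ) {z : EuclideanSpace ℝ (Fin n)}
    (hz1 : ‖z‖ = (Real.sqrt 2)⁻¹) (hz2 : ∀ i : Fin n, 2 ≤ (i : ℕ) → z i = 0) :
    ∫ y in unitAnnulus n 0 δ,
        (Metric.cthickening δ (lenzSet n hn)).indicator (fun _ => (1:ℝ)) (z + y)
      = (volume (Metric.cthickening δ (lenzSet n hn))).toReal := by
  set Eδ := Metric.cthickening δ (lenzSet n hn) with hEδ
  have hmeas : MeasurableSet Eδ := Eδ_measurable hn
  set D : Set (EuclideanSpace ℝ (Fin n)) := (fun y => z + y) ⁻¹' Eδ with hD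
  have hDmeas : MeasurableSet D := hmeas.preimage (measurable_const_add z)
  have hfun : ∀ y, Eδ.indicator (fun _ => (1:ℝ)) (z + y) = D.indicator (fun _ => (1:ℝ)) y := by
    intro y
    by_cases hmem : z + y ∈ Eδ
    · rw [Set.indicator_of_mem hmem, Set.indicator_of_mem (by exact hmem)]
    · rw [Set.indicator_of_notMem hmem, Set.indicator_of_notMem (by exact hmem)]
  rw [MeasureTheory.setIntegral_congr_fun (g := fun y => D.indicator (fun _ => (1:ℝ)) y)
    (annulus_measurable (n := n) 0 δ) (fun y _ => hfun y)]
  rw [MeasureTheory.setIntegral_indicator hDmeas]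
  have hsub : unitAnnulus n 0 δ ∩ D = D := by
    apply Set.inter_eq_right.mpr
    intro y hy
    have hmem : z + y ∈ unitAnnulus n z δ :=
      thickening_subset_annulus hδ0.le hz1 hz2 hy
    have hdd : dist (z + y) z = dist y 0 := by
      rw [dist_zero_right]
      simp [dist_eq_norm]
    exact ⟨by rw [← hdd]; exact hmem.1, by rw [← hdd]; exact hmem.2⟩
  rw [hsub, MeasureTheory.setIntegral_const, smul_eq_mul, mul_one, hD, measureReal_def,
    measure_preimage_add volume z Eδ]

lemma nikMax_nonneg (δ : ℝ) (f : EuclideanSpace ℝ (Fin n) → ℝ)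
    (x : EuclideanSpace ℝ (Fin n)) : 0 ≤ nikMax n δ f x :=
  Real.iSup_nonneg (fun _ => Real.iSup_nonneg (fun _ => by positivity))

set_option maxHeartbeats 1000000 in
lemma nikMax_lower (hδ0 : 0 < δ) (hδ1 : δ < 1/2)
    {x : EuclideanSpace ℝ (Fin n)} (hx : x ∈ Metric.ball (pcen n) (1/10)) :
    ((volume (unitAnnulus n 0 δ)).toReal)⁻¹ *
        (volume (Metric.cthickening δ (lenzSet n hn))).toReal ≤
      nikMax n δ ((Metric.cthickening δ (lenzSet n hn)).indicator (fun _ => (1:ℝ))) x := by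
  set Eδ := Metric.cthickening δ (lenzSet n hn) with hEδ
  set f := Eδ.indicator (fun _ => (1:ℝ)) with hf
  set A := (volume (unitAnnulus n 0 δ)).toReal with hA
  have hAnn : volume (unitAnnulus n 0 δ) ≠ ⊤ := by
    rw [annulus_eq]
    exact ((measure_mono (Set.diff_subset)).trans_lt
      measure_closedBall_lt_top).ne
  have hA0 : 0 ≤ A := ENNReal.toReal_nonneg
  -- the uniform bound on the inner expression
  have hg_bound : ∀ u : EuclideanSpace ℝ (Fin n),
      A⁻¹ * |∫ y in unitAnnulus n 0 δ, f (x + u + y)| ≤ 1 := by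
    intro u
    have hb : |∫ y in unitAnnulus n 0 δ, f (x + u + y)| ≤ 1 * A := by
      rw [hA, ← Real.norm_eq_abs]
      apply norm_setIntegral_le_of_norm_le_const (lt_top_iff_ne_top.mpr hAnn)
      · intro y _
        rw [hf]
        by_cases hmem : x + u + y ∈ Eδ
        · rw [Set.indicator_of_mem hmem]
          norm_num
        · rw [Set.indicator_of_notMem hmem]
          norm_num
    rcases eq_or_lt_of_le hA0 with h | h
    · rw [← h]
      simp
    · rw [inv_mul_le_iff₀ h, mul_comm]
      linarith
  obtain ⟨z, hz1, hz2, hzdist⟩ := exists_z hn hx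
  set u := z - x with hu
  have humem : u ∈ sphere (0 : EuclideanSpace ℝ (Fin n)) 1 := by
    rw [mem_sphere_zero_iff_norm, hu, ← dist_eq_norm, dist_comm]
    exact hzdist
  have hxu : x + u = z := by rw [hu]; abel
  have hval : A⁻¹ * |∫ y in unitAnnulus n 0 δ, f (x + u + y)| =
      A⁻¹ * (volume Eδ).toReal := by
    rw [hxu, hf, hEδ, integral_indicator_eq hn hδ0 hz1 hz2]
    rw [abs_of_nonneg ENNReal.toReal_nonneg]
  have hbdd : BddAbove (Set.range fun u : EuclideanSpace ℝ (Fin n) =>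
      ⨆ _ : u ∈ sphere (0 : EuclideanSpace ℝ (Fin n)) 1,
        A⁻¹ * |∫ y in unitAnnulus n 0 δ, f (x + u + y)|) := by
    refine ⟨1, ?_⟩
    rintro y ⟨u, rfl⟩
    exact Real.iSup_le (fun _ => hg_bound u) zero_le_one
  calc A⁻¹ * (volume Eδ).toReal
      = A⁻¹ * |∫ y in unitAnnulus n 0 δ, f (x + u + y)| := hval.symm
    _ ≤ nikMax n δ f x := by
        rw [nikMax]
        refine le_ciSup_of_le hbdd u ?_
        rw [ciSup_pos humem]

end Nik

lemma min_le_rpow {a e : ℝ} (ha : 0 < a) (he0 : 0 ≤ e) (he1 : e ≤ 1) : min a 1 ≤ a ^ e := by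
  rcases le_total a 1 with h | h
  · calc min a 1 ≤ a := min_le_left _ _
      _ = a ^ (1:ℝ) := (Real.rpow_one a).symm
      _ ≤ a ^ e := Real.rpow_le_rpow_of_exponent_ge ha h he1
  · calc min a 1 ≤ 1 := min_le_right _ _
      _ = a ^ (0:ℝ) := (Real.rpow_zero a).symm
      _ ≤ a ^ e := Real.rpow_le_rpow_of_exponent_le h he0

lemma final_real_ineq {K cb Wt Vt At δ r c₀ : ℝ} (hK : 0 < K) (hcb : 0 < cb) (hWt : 0 < Wt)
    (hAt : 0 < At) (hδ0 : 0 < δ)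
    (hVt : cb * δ^3 ≤ Vt) (hAtK : At ≤ K * δ)
    (hr0 : 0 ≤ r) (hr1 : r ≤ 1)
    (hc₀ : c₀ ≤ K⁻¹ * (min cb 1 * min Wt 1)) (hc₀0 : 0 ≤ c₀) :
    c₀ * δ^(2-3*r) * Vt^r ≤ At⁻¹ * Vt * Wt^r := by
  have hVt0 : 0 < Vt := lt_of_lt_of_le (by positivity) hVt
  have hδe : ∀ e : ℝ, 0 < δ ^ e := fun e => Real.rpow_pos_of_pos hδ0 e
  have f1 : (K*δ)⁻¹ ≤ At⁻¹ := by
    apply inv_anti₀ hAt hAtK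
  have hWr : min Wt 1 ≤ Wt^r := min_le_rpow hWt hr0 hr1
  have f2 : min cb 1 * (δ^(2-3*r) * δ) ≤ Vt^(1-r) := by
    have h2 : (cb * δ^3)^(1-r) ≤ Vt^(1-r) :=
      Real.rpow_le_rpow (by positivity) hVt (by linarith)
    have h3 : (cb*δ^3)^((1:ℝ)-r) = cb^((1:ℝ)-r) * ((δ^3 : ℝ))^((1:ℝ)-r) :=
      Real.mul_rpow hcb.le (by positivity)
    have h4 : ((δ^3 : ℝ))^((1:ℝ)-r) = δ^(3-3*r) := by
      rw [← Real.rpow_natCast δ 3, ← Real.rpow_mul hδ0.le,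
        show ((3:ℕ):ℝ) * (1-r) = 3-3*r by push_cast; ring]
    have h5 : min cb 1 ≤ cb^((1:ℝ)-r) := min_le_rpow hcb (by linarith) (by linarith)
    have h6 : δ^(2-3*r) * δ = δ^(3-3*r) := by
      rw [show (3-3*r : ℝ) = (2-3*r) + 1 by ring, Real.rpow_add hδ0, Real.rpow_one]
    calc min cb 1 * (δ^(2-3*r) * δ) = min cb 1 * δ^(3-3*r) := by rw [h6]
      _ ≤ cb^((1:ℝ)-r) * δ^(3-3*r) := mul_le_mul_of_nonneg_right h5 (hδe _).le
      _ = (cb*δ^3)^((1:ℝ)-r) := by rw [h3, h4]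
      _ ≤ Vt^(1-r) := h2
  calc c₀ * δ^(2-3*r) * Vt^r
      ≤ (K⁻¹ * (min cb 1 * min Wt 1)) * δ^(2-3*r) * Vt^r :=
        mul_le_mul_of_nonneg_right (mul_le_mul_of_nonneg_right hc₀ (hδe _).le)
          (Real.rpow_nonneg hVt0.le r)
    _ = (K*δ)⁻¹ * (Vt^r * (min cb 1 * (δ^(2-3*r) * δ))) * min Wt 1 := by
        rw [mul_inv]
        field_simp
    _ ≤ At⁻¹ * (Vt^r * Vt^(1-r)) * Wt^r := by
        have hm1 : (0:ℝ) < min cb 1 := lt_min hcb one_pos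
        have hm2 : (0:ℝ) < min Wt 1 := lt_min hWt one_pos
        apply mul_le_mul
        · apply mul_le_mul f1 (mul_le_mul_of_nonneg_left f2 (Real.rpow_nonneg hVt0.le r))
            (by positivity) (by positivity)
        · exact hWr
        · exact hm2.le
        · positivity
    _ = At⁻¹ * Vt * Wt^r := by
        rw [← Real.rpow_add hVt0, show r + (1-r) = (1:ℝ) by ring, Real.rpow_one]


set_option maxHeartbeats 2000000

/-- Lenz construction. Let `n ≥ 4`, `0 < δ < 1/2`,
`E = {(0,0)} × (1/√2)S^{n−3}` and `Z = (1/√2)S¹ × {0}^{n−2}`. Then for every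
`z ∈ Z`, `|E^δ ∩ S^δ(z)| ≥ c(n) |E^δ|`, and consequently
`‖N^δ‖_{L^p → L^p} ≥ c δ^{2 − 3/p}` for all `1 ≤ p ≤ ∞`. -/
theorem stmt19 (n : ℕ) (hn : 4 ≤ n) :
    ∃ c : ℝ, 0 < c ∧
      ∀ (δ : ℝ), 0 < δ → δ < 1/2 →
        (∀ z : EuclideanSpace ℝ (Fin n),
          ‖z‖ = (Real.sqrt 2)⁻¹ → (∀ i : Fin n, 2 ≤ (i : ℕ) → z i = 0) →
          ENNReal.ofReal c * volume (Metric.cthickening δ (lenzSet n hn)) ≤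
            volume (Metric.cthickening δ (lenzSet n hn) ∩ unitAnnulus n z δ)) ∧
        (∀ p : ℝ≥0∞, 1 ≤ p →
          ∃ f : EuclideanSpace ℝ (Fin n) → ℝ,
            eLpNorm f p volume ≠ 0 ∧ eLpNorm f p volume ≠ ∞ ∧
            ENNReal.ofReal (c * δ ^ (2 - 3 / p.toReal)) * eLpNorm f p volume ≤
              eLpNorm (nikMax n δ f) p volume) := by
  classical
  haveI := nontrivial_ES (n := n) (by omega)
  have hωt : 0 < (volume (Metric.ball (0 : EuclideanSpace ℝ (Fin n)) 1)).toReal :=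
    ENNReal.toReal_pos (measure_ball_pos volume 0 one_pos).ne' measure_ball_lt_top.ne
  have hω't : 0 < (volume (Metric.ball (0 : EuclideanSpace ℝ (Fin (n-2))) 1)).toReal :=
    ENNReal.toReal_pos (measure_ball_pos volume 0 one_pos).ne' measure_ball_lt_top.ne
  have hn0 : (0:ℝ) < (n:ℝ) := Nat.cast_pos.mpr (by omega)
  set ωt := (volume (Metric.ball (0 : EuclideanSpace ℝ (Fin n)) 1)).toReal with hωt_def
  set ω't := (volume (Metric.ball (0 : EuclideanSpace ℝ (Fin (n-2))) 1)).toReal with hω't_def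
  set K : ℝ := 2*(n:ℝ)*2^n*ωt with hK_def
  have hK : 0 < K := by positivity
  set cb : ℝ := (1/8)*(2/5:ℝ)^(n-3)*ω't with hcb_def
  have hcb : 0 < cb := by positivity
  set Wt : ℝ := ((1/10:ℝ)^n) * ωt with hWt_def
  have hWt : 0 < Wt := by positivity
  have hm1 : (0:ℝ) < min cb 1 := lt_min hcb one_pos
  have hm2 : (0:ℝ) < min Wt 1 := lt_min hWt one_pos
  set c : ℝ := min 1 (K⁻¹ * (min cb 1 * min Wt 1)) with hc_def
  have hc0 : 0 < c := lt_min one_pos (by positivity)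
  refine ⟨c, hc0, ?_⟩
  intro δ hδ0 hδ1
  have hV_fin : volume (Metric.cthickening δ (lenzSet n hn)) ≠ ⊤ :=
    ((isCompact_of_isClosed_isBounded Metric.isClosed_cthickening
      ((lenz_isCompact hn).isBounded.cthickening)).measure_lt_top).ne
  have hVt : cb * δ^3 ≤ (volume (Metric.cthickening δ (lenzSet n hn))).toReal := by
    have h := ENNReal.toReal_mono hV_fin (volume_cthickening_lower hn hδ0 hδ1)
    rw [ENNReal.toReal_mul, ENNReal.toReal_ofReal (by positivity)] at h
    calc cb * δ^3 = δ^3 * ((1/8)*(2/5:ℝ)^(n-3)) * ω't := by rw [hcb_def]; ring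
      _ ≤ _ := h
  have hVt0 : 0 < (volume (Metric.cthickening δ (lenzSet n hn))).toReal :=
    lt_of_lt_of_le (by positivity) hVt
  have hV0 : volume (Metric.cthickening δ (lenzSet n hn)) ≠ 0 := by
    intro h
    rw [h] at hVt0
    simp at hVt0
  constructor
  · intro z hz1 hz2
    rw [Set.inter_eq_left.mpr (thickening_subset_annulus hδ0.le hz1 hz2)]
    calc ENNReal.ofReal c * volume (Metric.cthickening δ (lenzSet n hn))
        ≤ 1 * volume (Metric.cthickening δ (lenzSet n hn)) :=
          mul_le_mul_left (ENNReal.ofReal_le_one.mpr (min_le_left _ _)) _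
      _ = volume (Metric.cthickening δ (lenzSet n hn)) := one_mul _
  · intro p hp
    have hp0 : p ≠ 0 := (zero_lt_one.trans_le hp).ne'
    have hr0 : (0:ℝ) ≤ 1/p.toReal := by positivity
    have hr1 : 1/p.toReal ≤ 1 := by
      by_cases hptop : p = ⊤
      · rw [hptop]
        simp
      · have h1q : (1:ℝ) ≤ p.toReal := by
          rw [← ENNReal.toReal_one]
          exact ENNReal.toReal_mono hptop hp
        rw [div_le_one (by linarith)]
        exact h1q
    -- annulus facts
    have hAval : volume (unitAnnulus n (0 : EuclideanSpace ℝ (Fin n)) δ) =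
        ENNReal.ofReal ((1+δ)^n - (1-δ)^n) *
          volume (Metric.ball (0 : EuclideanSpace ℝ (Fin n)) 1) := by
      rw [annulus_volume hn hδ0 hδ1, ENNReal.ofReal_sub _ (pow_nonneg (by linarith) n)]
    have hppos : (0:ℝ) < (1+δ)^n - (1-δ)^n := pow_sub_pow_pos (by omega) hδ0 hδ1
    have hAt_val : (volume (unitAnnulus n (0 : EuclideanSpace ℝ (Fin n)) δ)).toReal
        = ((1+δ)^n - (1-δ)^n) * ωt := by
      rw [hAval, ENNReal.toReal_mul, ENNReal.toReal_ofReal hppos.le]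
    have hAt0 : 0 < (volume (unitAnnulus n (0 : EuclideanSpace ℝ (Fin n)) δ)).toReal := by
      rw [hAt_val]
      exact mul_pos hppos hωt
    have hAtK : (volume (unitAnnulus n (0 : EuclideanSpace ℝ (Fin n)) δ)).toReal ≤ K * δ := by
      rw [hAt_val, hK_def]
      have hple := pow_sub_pow_le (n := n) hδ0.le hδ1.le
      nlinarith [hωt, hppos]
    have hfnorm : eLpNorm
        ((Metric.cthickening δ (lenzSet n hn)).indicator (fun _ => (1:ℝ))) p volume
        = volume (Metric.cthickening δ (lenzSet n hn)) ^ (1/p.toReal) := by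
      rw [eLpNorm_indicator_const' (Eδ_measurable hn) hV0 hp0]
      simp
    refine ⟨(Metric.cthickening δ (lenzSet n hn)).indicator (fun _ => (1:ℝ)), ?_, ?_, ?_⟩
    · rw [hfnorm]
      exact (ENNReal.rpow_pos (zero_lt_iff.mpr hV0) hV_fin).ne'
    · rw [hfnorm]
      exact ENNReal.rpow_ne_top_of_nonneg hr0 hV_fin
    · have hM0 : (0:ℝ) ≤ ((volume (unitAnnulus n (0 : EuclideanSpace ℝ (Fin n)) δ)).toReal)⁻¹
          * (volume (Metric.cthickening δ (lenzSet n hn))).toReal := by positivity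
      have hmono : eLpNorm ((Metric.ball (pcen n) (1/10)).indicator (fun _ =>
            ((volume (unitAnnulus n (0 : EuclideanSpace ℝ (Fin n)) δ)).toReal)⁻¹
              * (volume (Metric.cthickening δ (lenzSet n hn))).toReal)) p volume
          ≤ eLpNorm (nikMax n δ
            ((Metric.cthickening δ (lenzSet n hn)).indicator (fun _ => (1:ℝ)))) p volume := by
        apply eLpNorm_mono
        intro x
        rw [Real.norm_eq_abs, Real.norm_eq_abs]
        by_cases hx : x ∈ Metric.ball (pcen n) (1/10)
        · rw [Set.indicator_of_mem hx, abs_of_nonneg hM0,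
            abs_of_nonneg (nikMax_nonneg δ _ x)]
          exact nikMax_lower hn hδ0 hδ1 hx
        · rw [Set.indicator_of_notMem hx, abs_zero]
          exact abs_nonneg _
      have hWball : volume (Metric.ball (pcen n) (1/10)) =
          ENNReal.ofReal ((1/10:ℝ)^n) * volume (Metric.ball (0 : EuclideanSpace ℝ (Fin n)) 1) := by
        rw [Measure.addHaar_ball volume _ (by norm_num : (0:ℝ) ≤ 1/10),
          finrank_euclideanSpace_fin]
      have hWfin : volume (Metric.ball (pcen n) (1/10)) ≠ ⊤ := measure_ball_lt_top.ne
      have hWne : volume (Metric.ball (pcen n) (1/10)) ≠ 0 :=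
        (measure_ball_pos volume _ (by norm_num)).ne'
      have hWt_val : (volume (Metric.ball (pcen n) (1/10))).toReal = Wt := by
        rw [hWball, ENNReal.toReal_mul, ENNReal.toReal_ofReal (by positivity)]
      have hWnorm : eLpNorm ((Metric.ball (pcen n) (1/10)).indicator (fun _ =>
            ((volume (unitAnnulus n (0 : EuclideanSpace ℝ (Fin n)) δ)).toReal)⁻¹
              * (volume (Metric.cthickening δ (lenzSet n hn))).toReal)) p volume
          = ENNReal.ofReal (((volume (unitAnnulus n (0 : EuclideanSpace ℝ (Fin n)) δ)).toReal)⁻¹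
              * (volume (Metric.cthickening δ (lenzSet n hn))).toReal)
            * volume (Metric.ball (pcen n) (1/10)) ^ (1/p.toReal) := by
        rw [eLpNorm_indicator_const' measurableSet_ball hWne hp0,
          Real.enorm_eq_ofReal hM0]
      have hreal : (c * δ ^ (2 - 3/p.toReal)) *
          ((volume (Metric.cthickening δ (lenzSet n hn))).toReal) ^ (1/p.toReal)
          ≤ (((volume (unitAnnulus n (0 : EuclideanSpace ℝ (Fin n)) δ)).toReal)⁻¹
              * (volume (Metric.cthickening δ (lenzSet n hn))).toReal)
            * ((volume (Metric.ball (pcen n) (1/10))).toReal) ^ (1/p.toReal) := by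
        rw [hWt_val, show (2 - 3/p.toReal : ℝ) = 2 - 3*(1/p.toReal) by ring]
        exact final_real_ineq hK hcb hWt hAt0 hδ0 hVt hAtK hr0 hr1
          (min_le_right _ _) hc0.le
      rw [hfnorm]
      calc ENNReal.ofReal (c * δ ^ (2 - 3 / p.toReal)) *
            volume (Metric.cthickening δ (lenzSet n hn)) ^ (1/p.toReal)
          = ENNReal.ofReal ((c * δ ^ (2 - 3/p.toReal)) *
              ((volume (Metric.cthickening δ (lenzSet n hn))).toReal) ^ (1/p.toReal)) := by
            rw [← ENNReal.ofReal_toReal hV_fin, ENNReal.ofReal_rpow_of_pos hVt0,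
              ← ENNReal.ofReal_mul (by positivity), ENNReal.ofReal_toReal hV_fin]
        _ ≤ ENNReal.ofReal ((((volume (unitAnnulus n (0 : EuclideanSpace ℝ (Fin n)) δ)).toReal)⁻¹
              * (volume (Metric.cthickening δ (lenzSet n hn))).toReal)
            * ((volume (Metric.ball (pcen n) (1/10))).toReal) ^ (1/p.toReal)) :=
            ENNReal.ofReal_le_ofReal hreal
        _ = ENNReal.ofReal (((volume (unitAnnulus n (0 : EuclideanSpace ℝ (Fin n)) δ)).toReal)⁻¹
              * (volume (Metric.cthickening δ (lenzSet n hn))).toReal)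
            * volume (Metric.ball (pcen n) (1/10)) ^ (1/p.toReal) := by
            rw [ENNReal.ofReal_mul hM0]
            congr 1
            rw [← ENNReal.ofReal_toReal hWfin, ENNReal.ofReal_rpow_of_pos (by rw [hWt_val]; exact hWt),
              ENNReal.ofReal_toReal hWfin]
        _ = eLpNorm ((Metric.ball (pcen n) (1/10)).indicator (fun _ =>
              ((volume (unitAnnulus n (0 : EuclideanSpace ℝ (Fin n)) δ)).toReal)⁻¹
                * (volume (Metric.cthickening δ (lenzSet n hn))).toReal)) p volume := hWnorm.symm
        _ ≤ _ := hmono
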